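/- A finite abelian group G is code-perfect if and only if there exist an integer d ≥ 0 and a finite abelian group Q of odd order such that G is isomorphic to the direct product (ℤ/2ℤ)^d × Q (where for d = 0 this product is interpreted as Q). -/

import Mathlib

/-- The Cayley graph of a group `G` with connection set `S`: distinct vertices `x`, `y`
are adjacent iff `y * x⁻¹ ∈ S` (for inverse-closed `S` this relation is symmetric). -/
def cayley (G : Type*) [Group G] (S : Set G) : SimpleGraph G :=
  SimpleGraph.fromRel (fun x y => y * x⁻¹ ∈ S)

/-- `C` is a perfect code in the graph `Γ`: `C` is an independent set and every vertex
outside `C` is adjacent to exactly one vertex of `C`. -/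
def IsPerfectCode {V : Type*} (Γ : SimpleGraph V) (C : Set V) : Prop :=
  (∀ u ∈ C, ∀ v ∈ C, ¬ Γ.Adj u v) ∧ ∀ v ∉ C, ∃! u, u ∈ C ∧ Γ.Adj v u

/-- `C` is a perfect code of the group `G`: there is an inverse-closed `S ⊆ G` with
`1 ∉ S` such that `C` is a perfect code in `Cay(G, S)`. -/
def IsPerfectCodeOfGroup (G : Type*) [Group G] (C : Set G) : Prop :=
  ∃ S : Set G, S⁻¹ = S ∧ (1 : G) ∉ S ∧ IsPerfectCode (cayley G S) C

/-- A group is code-perfect if every subgroup is a perfect code of the group. -/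
def IsCodePerfect (G : Type*) [Group G] : Prop :=
  ∀ H : Subgroup G, IsPerfectCodeOfGroup G (H : Set G)

section Aux

variable {G : Type*} [CommGroup G] [Fintype G]

/-- If `G` has no elements of order 4, then `g²` has odd order. -/
lemma CP.odd_orderOf_sq (hG : ∀ g : G, g ^ 4 = 1 → g ^ 2 = 1) (g : G) :
    Odd (orderOf (g ^ 2)) := by
  rw [← Nat.not_even_iff_odd]
  intro hev
  obtain ⟨t, ht⟩ := hev
  have hpos : 0 < orderOf (g ^ 2) := orderOf_pos _
  have htpos : 0 < t := by omega
  have hw : (g ^ t) ^ 4 = 1 := by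
    calc (g ^ t) ^ 4 = (g ^ 2) ^ (t + t) := by
          rw [← pow_mul, ← pow_mul]; congr 1; ring
    _ = 1 := by rw [← ht]; exact pow_orderOf_eq_one _
  have hw2 : (g ^ 2) ^ t = 1 := by
    have h2 := hG (g ^ t) hw
    calc (g ^ 2) ^ t = (g ^ t) ^ 2 := by rw [← pow_mul, ← pow_mul, Nat.mul_comm]
    _ = 1 := h2
  have hle : orderOf (g ^ 2) ≤ t := Nat.le_of_dvd htpos (orderOf_dvd_of_pow_eq_one hw2)
  omega

/-- If `y² ∈ H`, then `y` can be corrected by an element of `H` to an element of order ≤ 2. -/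
lemma CP.lift_sq (hG : ∀ g : G, g ^ 4 = 1 → g ^ 2 = 1) (H : Subgroup G) (y : G)
    (hy : y ^ 2 ∈ H) : ∃ h ∈ H, (y * h) ^ 2 = 1 := by
  obtain ⟨t, ht⟩ := CP.odd_orderOf_sq hG y
  refine ⟨(y ^ 2) ^ (2 * t ^ 2 + 2 * t), pow_mem hy _, ?_⟩
  have key : (y ^ 2) ^ ((2 * t + 1) * (2 * t + 1)) = 1 := by
    rw [pow_mul, ← ht, pow_orderOf_eq_one, one_pow]
  calc (y * (y ^ 2) ^ (2 * t ^ 2 + 2 * t)) ^ 2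
      = y ^ 2 * ((y ^ 2) ^ (2 * t ^ 2 + 2 * t)) ^ 2 := by rw [mul_pow]
    _ = (y ^ 2) ^ (1 + (2 * t ^ 2 + 2 * t) * 2) := by
        rw [pow_add (y ^ 2) 1, pow_one, pow_mul]
    _ = (y ^ 2) ^ ((2 * t + 1) * (2 * t + 1)) := by congr 1; ring
    _ = 1 := key

lemma CP.quot_lift (hG : ∀ g : G, g ^ 4 = 1 → g ^ 2 = 1) (H : Subgroup G) (x : G ⧸ H)
    (hx : x * x = 1) : ∃ g : G, (QuotientGroup.mk g : G ⧸ H) = x ∧ g * g = 1 := by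
  obtain ⟨y, rfl⟩ := QuotientGroup.mk_surjective x
  have hy : y ^ 2 ∈ H := by
    rw [← QuotientGroup.eq_one_iff (y ^ 2), pow_two]
    simpa using hx
  obtain ⟨h, hh, hyh⟩ := CP.lift_sq hG H y hy
  refine ⟨y * h, ?_, by rw [← pow_two]; exact hyh⟩
  rw [QuotientGroup.mk_mul, (QuotientGroup.eq_one_iff h).2 hh, mul_one]

lemma CP.exists_sigma (hG : ∀ g : G, g ^ 4 = 1 → g ^ 2 = 1) (H : Subgroup G) :
    ∃ σ : G ⧸ H → G, (∀ x, (QuotientGroup.mk (σ x) : G ⧸ H) = x) ∧ σ 1 = 1 ∧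
      ∀ x, σ x⁻¹ = (σ x)⁻¹ := by
  classical
  obtain ⟨n, ⟨e⟩⟩ := Finite.exists_equiv_fin (G ⧸ H)
  set σ : G ⧸ H → G := fun x =>
    if x = 1 then 1
    else if hx : x * x = 1 then Classical.choose (CP.quot_lift hG H x hx)
    else if (e x : ℕ) ≤ (e x⁻¹ : ℕ) then Quotient.out x else (Quotient.out (x⁻¹ : G ⧸ H))⁻¹
    with hσ
  have hmk : ∀ x, (QuotientGroup.mk (σ x) : G ⧸ H) = x := by
    intro x
    rw [hσ]
    by_cases h1 : x = 1
    · simp [h1]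
    · by_cases h2 : x * x = 1
      · simp only [h1, if_false, h2, dif_pos]
        exact (Classical.choose_spec (CP.quot_lift hG H x h2)).1
      · simp only [h1, if_false, h2, dif_neg, not_false_iff]
        by_cases h3 : (e x : ℕ) ≤ (e x⁻¹ : ℕ)
        · simpa [h3] using QuotientGroup.out_eq' x
        · simp only [h3, if_false]
          rw [QuotientGroup.mk_inv, QuotientGroup.out_eq', inv_inv]
  have hσ1 : σ 1 = 1 := by rw [hσ]; simp
  refine ⟨σ, hmk, hσ1, ?_⟩
  intro x
  by_cases h1 : x = 1
  · simp [h1, hσ1]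
  by_cases h2 : x * x = 1
  · have hxinv : x⁻¹ = x := by
      rw [inv_eq_iff_mul_eq_one]; exact h2
    have hs : σ x * σ x = 1 := by
      rw [hσ]
      simp only [h1, if_false, h2, dif_pos]
      exact (Classical.choose_spec (CP.quot_lift hG H x h2)).2
    rw [hxinv]
    exact eq_inv_of_mul_eq_one_right hs
  · have hx1 : x⁻¹ ≠ 1 := by
      intro h; exact h1 (by rw [← inv_inv x, h, inv_one])
    have hx2 : ¬ (x⁻¹ * x⁻¹ = 1) := by
      intro h
      apply h2
      have : (x * x)⁻¹ = 1 := by rw [mul_inv]; exact h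
      rw [← inv_inv (x * x), this, inv_one]
    have hne : x ≠ x⁻¹ := by
      intro h
      apply h2
      nth_rewrite 2 [h]
      exact mul_inv_cancel x
    have hne' : (e x : ℕ) ≠ (e x⁻¹ : ℕ) := by
      intro h
      exact hne (e.injective (Fin.val_injective h))
    by_cases h3 : (e x : ℕ) ≤ (e x⁻¹ : ℕ)
    · have h3' : ¬ ((e x⁻¹ : ℕ) ≤ (e x⁻¹⁻¹ : ℕ)) := by
        rw [inv_inv]; omega
      rw [hσ]
      simp only [h1, hx1, if_false, h2, hx2, dif_neg, not_false_iff, h3, if_true, h3', inv_inv]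
      rw [if_neg (show ¬ ((e x⁻¹ : ℕ) ≤ (e x : ℕ)) by omega)]
    · have h3' : (e x⁻¹ : ℕ) ≤ (e x⁻¹⁻¹ : ℕ) := by
        rw [inv_inv]; omega
      rw [hσ]
      simp only [h1, hx1, if_false, h2, hx2, dif_neg, not_false_iff, h3, h3', if_true, inv_inv]
      rw [if_pos (show (e x⁻¹ : ℕ) ≤ (e x : ℕ) by omega)]


lemma CP.isCodePerfect (hG : ∀ g : G, g ^ 4 = 1 → g ^ 2 = 1) : IsCodePerfect G := by
  intro H
  obtain ⟨σ, hmk, hσ1, hinv⟩ := CP.exists_sigma hG H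
  set S : Set G := σ '' {x | x ≠ 1} with hS
  have hmem : ∀ s ∈ S, ∃ x : G ⧸ H, x ≠ 1 ∧ σ x = s := by
    rintro s ⟨x, hx, rfl⟩; exact ⟨x, hx, rfl⟩
  have hσmem : ∀ x : G ⧸ H, x ≠ 1 → σ x ∈ S := fun x hx => ⟨x, hx, rfl⟩
  have hnotH : ∀ s ∈ S, s ∉ H := by
    intro s hs hsH
    obtain ⟨x, hx, rfl⟩ := hmem s hs
    exact hx (by rw [← hmk x, QuotientGroup.eq_one_iff]; exact hsH)
  refine ⟨S, ?_, ?_, ?_, ?_⟩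
  · -- inverse closed
    ext s
    simp only [Set.mem_inv]
    constructor
    · intro hs
      obtain ⟨x, hx, hxs⟩ := hmem _ hs
      have h5 : σ x⁻¹ = s := by rw [hinv, hxs, inv_inv]
      exact h5 ▸ hσmem x⁻¹ (inv_ne_one.mpr hx)
    · intro hs
      obtain ⟨x, hx, hxs⟩ := hmem _ hs
      have h5 : σ x⁻¹ = s⁻¹ := by rw [hinv, hxs]
      exact h5 ▸ hσmem x⁻¹ (inv_ne_one.mpr hx)
  · -- 1 ∉ S
    intro h1
    obtain ⟨x, hx, hxs⟩ := hmem _ h1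
    exact hx (by rw [← hmk x, hxs]; rfl)
  · -- independence
    intro u hu v hv hadj
    rw [cayley, SimpleGraph.fromRel_adj] at hadj
    obtain ⟨hne, hor⟩ := hadj
    rcases hor with h | h
    · exact hnotH _ h (mul_mem hv (inv_mem hu))
    · exact hnotH _ h (mul_mem hu (inv_mem hv))
  · -- unique neighbor
    intro v hv
    have hv1 : (QuotientGroup.mk v : G ⧸ H) ≠ 1 := by
      rw [Ne, QuotientGroup.eq_one_iff]; exact hv
    set u₀ : G := v * (σ (QuotientGroup.mk v))⁻¹ with hu₀
    have hu₀H : u₀ ∈ H := by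
      rw [← QuotientGroup.eq_one_iff, QuotientGroup.mk_mul, QuotientGroup.mk_inv, hmk,
        mul_inv_cancel]
    refine ⟨u₀, ⟨hu₀H, ?_⟩, ?_⟩
    · rw [cayley, SimpleGraph.fromRel_adj]
      refine ⟨fun h => hv (h ▸ hu₀H), Or.inl ?_⟩
      have key : u₀ * v⁻¹ = σ (QuotientGroup.mk v)⁻¹ := by
        rw [hinv, hu₀, mul_comm v, mul_assoc, mul_inv_cancel, mul_one]
      rw [key]
      exact hσmem _ (inv_ne_one.mpr hv1)
    · rintro u ⟨huH, hadj⟩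
      rw [cayley, SimpleGraph.fromRel_adj] at hadj
      obtain ⟨hne, hor⟩ := hadj
      rcases hor with h | h
      · -- u * v⁻¹ ∈ S
        obtain ⟨x, hx, hxs⟩ := hmem _ h
        have hxe : x = (QuotientGroup.mk v : G ⧸ H)⁻¹ := by
          rw [← hmk x, hxs, QuotientGroup.mk_mul, QuotientGroup.mk_inv,
            (QuotientGroup.eq_one_iff u).2 huH, one_mul]
        have h6 : u * v⁻¹ = (σ (QuotientGroup.mk v))⁻¹ := by
          rw [← hxs, hxe, hinv]
        rw [hu₀, ← h6, mul_comm u v⁻¹, mul_inv_cancel_left]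
      · -- v * u⁻¹ ∈ S
        obtain ⟨x, hx, hxs⟩ := hmem _ h
        have hxe : x = (QuotientGroup.mk v : G ⧸ H) := by
          rw [← hmk x, hxs, QuotientGroup.mk_mul, QuotientGroup.mk_inv,
            (QuotientGroup.eq_one_iff u).2 huH, inv_one, mul_one]
        have h6 : v * u⁻¹ = σ (QuotientGroup.mk v) := by rw [← hxs, hxe]
        rw [hu₀, ← h6, mul_inv, inv_inv, mul_inv_cancel_left]

lemma CP.no_four (hCP : IsCodePerfect G) (g : G) (h4 : g ^ 4 = 1) : g ^ 2 = 1 := by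
  by_contra h2
  set a : G := g ^ 2 with ha
  have haa : a * a = 1 := by rw [ha, ← pow_add]; exact h4
  have h2z : a ^ (2 : ℤ) = 1 := by
    rw [show (2 : ℤ) = ((2 : ℕ) : ℤ) by norm_num, zpow_natCast, pow_two]
    exact haa
  have hg1 : g ≠ 1 := by
    intro h; exact h2 (by rw [ha, h, one_pow])
  have hga : g ≠ a := by
    intro h
    apply h2
    have hg' : g * 1 = g * g := by
      nth_rewrite 1 [h]; rw [ha, pow_two, mul_one]
    have : (1 : G) = g := mul_left_cancel hg'
    rw [ha, ← this, one_pow]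
  set H : Subgroup G := Subgroup.zpowers a with hH
  have hgH : g ∉ H := by
    intro hgH
    obtain ⟨k, hk⟩ := Subgroup.mem_zpowers_iff.mp hgH
    apply h2
    calc g ^ 2 = a ^ k * a ^ k := by rw [pow_two, hk]
      _ = a ^ (2 * k) := by rw [← zpow_add]; congr 1; ring
      _ = (a ^ (2 : ℤ)) ^ k := by rw [← zpow_mul]
      _ = 1 := by rw [h2z, one_zpow]
  obtain ⟨S, hSinv, h1S, hind, huniq⟩ := hCP H
  have hS_inv_mem : ∀ s, s ∈ S → s⁻¹ ∈ S := by
    intro s hs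
    rw [← hSinv]
    simpa [Set.mem_inv] using hs
  obtain ⟨u, ⟨huH, hadj⟩, hufun⟩ := huniq g hgH
  have hu_cases : u = 1 ∨ u = a := by
    obtain ⟨k, hk⟩ := Subgroup.mem_zpowers_iff.mp huH
    rcases Int.even_or_odd k with ⟨m, hm⟩ | ⟨m, hm⟩
    · left
      rw [← hk, hm]
      calc a ^ (m + m) = (a ^ (2 : ℤ)) ^ m := by rw [← zpow_mul]; congr 1; ring
        _ = 1 := by rw [h2z, one_zpow]
    · right
      rw [← hk, hm, zpow_add, zpow_one]
      calc a ^ (2 * m) * a = (a ^ (2 : ℤ)) ^ m * a := by rw [← zpow_mul]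
        _ = a := by rw [h2z, one_zpow, one_mul]
  have hag : a * g⁻¹ = g := by
    rw [ha, pow_two, mul_inv_cancel_right]
  have hga' : g * a⁻¹ = g⁻¹ := by
    rw [ha, pow_two, mul_inv, ← mul_assoc, mul_inv_cancel, one_mul]
  rw [cayley, SimpleGraph.fromRel_adj] at hadj
  obtain ⟨hne, hor⟩ := hadj
  have hgS : g ∈ S := by
    rcases hu_cases with rfl | rfl
    · rcases hor with h | h
      · simpa using hS_inv_mem _ h
      · simpa using h
    · rcases hor with h | h
      · rwa [hag] at h
      · rw [hga'] at h
        simpa using hS_inv_mem _ h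
  have hgiS : g⁻¹ ∈ S := hS_inv_mem _ hgS
  have h1' : (1 : G) = u := by
    apply hufun
    refine ⟨one_mem H, ?_⟩
    rw [cayley, SimpleGraph.fromRel_adj]
    exact ⟨hg1, Or.inl (by simpa using hgiS)⟩
  have ha' : a = u := by
    apply hufun
    refine ⟨Subgroup.mem_zpowers a, ?_⟩
    rw [cayley, SimpleGraph.fromRel_adj]
    exact ⟨hga, Or.inl (by rwa [hag])⟩
  exact h2 (ha'.trans h1'.symm)

end Aux

section Struct

variable {G : Type*} [CommGroup G] [Fintype G]

lemma CP.exists_iso (hG : ∀ g : G, g ^ 4 = 1 → g ^ 2 = 1) :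
    ∃ (d : ℕ) (Q : Type) (_ : CommGroup Q) (_ : Fintype Q),
      Odd (Fintype.card Q) ∧
      Nonempty (G ≃* ((Fin d → Multiplicative (ZMod 2)) × Q)) := by
  classical
  set A : Subgroup G :=
    { carrier := {g : G | g ^ 2 = 1}
      one_mem' := one_pow 2
      mul_mem' := by
        intro x y hx hy
        simp only [Set.mem_setOf_eq] at *
        rw [mul_pow, hx, hy, one_mul]
      inv_mem' := by
        intro x hx
        simp only [Set.mem_setOf_eq] at *
        rw [inv_pow, hx, inv_one] } with hA
  set Qs : Subgroup G :=
    { carrier := {g : G | Odd (orderOf g)}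
      one_mem' := by simp [Set.mem_setOf_eq]
      mul_mem' := by
        intro x y hx hy
        simp only [Set.mem_setOf_eq] at *
        have h1 : orderOf (x * y) ∣ orderOf x * orderOf y :=
          ((Commute.all x y).orderOf_mul_dvd_lcm).trans (Nat.lcm_dvd_mul _ _)
        have hodd : Odd (orderOf x * orderOf y) := hx.mul hy
        rw [← Nat.not_even_iff_odd] at *
        intro hev
        exact hodd (even_iff_two_dvd.mpr (dvd_trans hev.two_dvd h1))
      inv_mem' := by
        intro x hx
        simpa only [Set.mem_setOf_eq, orderOf_inv] using hx } with hQ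
  have hmemA : ∀ g : G, g ^ 2 = 1 → g ∈ A := fun g hg => hg
  have hmemQ : ∀ g : G, Odd (orderOf g) → g ∈ Qs := fun g hg => hg
  have hdisj : ∀ g : G, g ∈ A → g ∈ Qs → g = 1 := by
    intro g hgA hgQ
    have hgA' : g ^ 2 = 1 := hgA
    have hgQ' : Odd (orderOf g) := hgQ
    have h1 : orderOf g ∣ 2 := orderOf_dvd_of_pow_eq_one hgA'
    rcases (Nat.dvd_prime Nat.prime_two).mp h1 with h | h
    · exact orderOf_eq_one_iff.mp h
    · rw [h] at hgQ'
      exact absurd hgQ' (by decide)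
  have hsup : ∀ g : G, ∃ x ∈ A, ∃ q ∈ Qs, x * q = g := by
    intro g
    have hgQ : g ^ 2 ∈ Qs := hmemQ _ (CP.odd_orderOf_sq hG g)
    obtain ⟨h, hh, hgh⟩ := CP.lift_sq hG Qs g hgQ
    exact ⟨g * h, hmemA _ hgh, h⁻¹, inv_mem hh, by rw [mul_assoc, mul_inv_cancel, mul_one]⟩
  -- the internal direct product
  let φ : (↥A × ↥Qs) →* G := (A.subtype).coprod (Qs.subtype)
  have hφ : ∀ p : ↥A × ↥Qs, φ p = (p.1 : G) * (p.2 : G) := fun p => rfl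
  have hinj : Function.Injective φ := by
    rw [injective_iff_map_eq_one]
    rintro ⟨x, y⟩ hxy
    rw [hφ] at hxy
    have hx1 : (x : G) = 1 := by
      refine hdisj _ x.2 ?_
      rw [eq_inv_of_mul_eq_one_left hxy]
      exact inv_mem y.2
    have hy1 : (y : G) = 1 := by
      rw [hx1, one_mul] at hxy
      exact hxy
    exact Prod.ext (Subtype.ext hx1) (Subtype.ext hy1)
  have hsurj : Function.Surjective φ := by
    intro g
    obtain ⟨x, hx, q, hq, hxq⟩ := hsup g
    exact ⟨(⟨x, hx⟩, ⟨q, hq⟩), hxq⟩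
  let eGA : G ≃* (↥A × ↥Qs) := (MulEquiv.ofBijective φ ⟨hinj, hsurj⟩).symm
  -- A is an elementary abelian 2-group
  have hA2 : ∀ x : Additive ↥A, (2 : ℕ) • x = 0 := by
    intro x
    apply Additive.toMul.injective
    rw [toMul_nsmul]
    show (x.toMul : ↥A) ^ 2 = Additive.toMul 0
    apply Subtype.ext
    push_cast
    exact x.toMul.2
  letI : Module (ZMod 2) (Additive ↥A) := AddCommGroup.zmodModule hA2
  let d := Module.finrank (ZMod 2) (Additive ↥A)
  let eA1 : Additive ↥A ≃+ (Fin d → ZMod 2) :=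
    (Module.finBasis (ZMod 2) (Additive ↥A)).equivFun.toAddEquiv
  let eA : ↥A ≃* (Fin d → Multiplicative (ZMod 2)) :=
    (AddEquiv.toMultiplicativeRight eA1).trans (MulEquiv.funMultiplicative _ _)
  -- Q has odd order
  have hoddQ : Odd (Fintype.card ↥Qs) := by
    rw [← Nat.not_even_iff_odd]
    intro hev
    haveI : Fact (Nat.Prime 2) := ⟨Nat.prime_two⟩
    obtain ⟨x, hx⟩ := exists_prime_orderOf_dvd_card 2 hev.two_dvd
    have hxo : Odd (orderOf (x : G)) := x.2
    rw [Subgroup.orderOf_coe, hx] at hxo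
    exact absurd hxo (by decide)
  -- shrink Q to Type 0
  haveI hsmall : Small.{0} ↥Qs := small_of_injective (Fintype.equivFin ↥Qs).injective
  letI : Fintype (Shrink.{0} ↥Qs) := Fintype.ofEquiv ↥Qs (equivShrink ↥Qs)
  have hcard : Fintype.card (Shrink.{0} ↥Qs) = Fintype.card ↥Qs :=
    Fintype.card_congr (equivShrink ↥Qs).symm
  let eQ : ↥Qs ≃* Shrink.{0} ↥Qs := (Shrink.mulEquiv).symm
  refine ⟨d, Shrink.{0} ↥Qs, inferInstance, inferInstance, by rw [hcard]; exact hoddQ,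
    ⟨eGA.trans (MulEquiv.prodCongr eA eQ)⟩⟩

lemma CP.of_iso {d : ℕ} {Q : Type} [CommGroup Q] [Fintype Q] (hodd : Odd (Fintype.card Q))
    (e : G ≃* ((Fin d → Multiplicative (ZMod 2)) × Q)) (g : G) (h4 : g ^ 4 = 1) :
    g ^ 2 = 1 := by
  have h4' : (e g) ^ 4 = 1 := by rw [← map_pow, h4, map_one]
  have hq4 : (e g).2 ^ 4 = 1 := by
    have := congrArg Prod.snd h4'
    simpa using this
  have hq : (e g).2 = 1 := by
    rw [← orderOf_eq_one_iff]
    have hdvd : orderOf (e g).2 ∣ 4 := orderOf_dvd_of_pow_eq_one hq4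
    have hdvd2 : orderOf (e g).2 ∣ Fintype.card Q := orderOf_dvd_card
    have hodd' : Odd (orderOf (e g).2) := by
      rw [← Nat.not_even_iff_odd] at *
      intro hev
      exact hodd (even_iff_two_dvd.mpr (dvd_trans hev.two_dvd hdvd2))
    have hcop : Nat.Coprime (orderOf (e g).2) 4 := by
      have h2 : Nat.Coprime (orderOf (e g).2) 2 := hodd'.coprime_two_right
      simpa using h2.pow_right 2
    exact hcop.eq_one_of_dvd hdvd
  have ha : (e g).1 ^ 2 = 1 := by
    funext i
    rw [Pi.pow_apply, Pi.one_apply]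
    generalize (e g).1 i = z
    revert z
    decide
  have h2' : (e g) ^ 2 = 1 := by
    have h1 : ((e g) ^ 2).1 = (1 : (Fin d → Multiplicative (ZMod 2)) × Q).1 := ha
    have h2 : ((e g) ^ 2).2 = (1 : (Fin d → Multiplicative (ZMod 2)) × Q).2 := by
      show (e g).2 ^ 2 = 1
      rw [hq, one_pow]
    exact Prod.ext h1 h2
  have := congrArg e.symm (by rw [map_pow, h2'] : e (g ^ 2) = 1)
  simpa using this

end Struct

/-- A finite abelian group is code-perfect iff it is isomorphic to `(ℤ/2ℤ)^d × Q` for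
some `d ≥ 0` and some finite abelian group `Q` of odd order. -/
theorem abelian_code_perfect_iff (G : Type*) [CommGroup G] [Fintype G] :
    IsCodePerfect G ↔
      ∃ (d : ℕ) (Q : Type) (_ : CommGroup Q) (_ : Fintype Q),
        Odd (Fintype.card Q) ∧
        Nonempty (G ≃* ((Fin d → Multiplicative (ZMod 2)) × Q)) := by
  constructor
  · intro h
    exact CP.exists_iso (fun g => CP.no_four h g)
  · rintro ⟨d, Q, _, _, hodd, ⟨e⟩⟩
    exact CP.isCodePerfect (fun g h4 => CP.of_iso hodd e g h4)
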